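/- Under the same hypotheses (u' ≤ 2λ₂ u + γ u^{3/2} + 2εCN^{1/2} u^{1/2}, λ₂ < 0, 0 < ε < |λ₂|²/(2CN^{1/2}γ), r = 2εCN^{1/2}/|λ₂|, R = |λ₂|/γ), if u(0) < R² then limsup_{t→∞} u(t) ≤ r². -/

import Mathlib

open Real Filter

set_option maxHeartbeats 1000000 in
/-- Convergence into the small ball: under the same differential inequality,
if `u(0) < R²` then `limsup_{t→∞} u(t) ≤ r²`. -/
theorem stmt_7 (u : ℝ → ℝ) (lam2 γ C N ε : ℝ)
    (hlam : lam2 < 0) (hγ : 0 < γ) (hC : 0 < C) (hN : 0 < N)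
    (hε : 0 < ε) (hεsmall : ε < |lam2| ^ 2 / (2 * C * Real.sqrt N * γ))
    (hdiff : Differentiable ℝ u)
    (hnonneg : ∀ t, 0 ≤ t → 0 ≤ u t)
    (hineq : ∀ t, 0 ≤ t →
      deriv u t ≤ 2 * lam2 * u t + γ * (u t * Real.sqrt (u t))
        + 2 * ε * C * Real.sqrt N * Real.sqrt (u t))
    (r R : ℝ) (hr : r = 2 * ε * C * Real.sqrt N / |lam2|) (hR : R = |lam2| / γ)
    (h0 : u 0 < R ^ 2) :
    limsup u atTop ≤ r ^ 2 := by
  have hsN : 0 < Real.sqrt N := Real.sqrt_pos.mpr hN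
  have hLpos : 0 < |lam2| := abs_pos.mpr hlam.ne
  have habs : |lam2| = -lam2 := abs_of_neg hlam
  have hbpos : 0 < 2 * ε * C * Real.sqrt N := by positivity
  have hkey : 2 * ε * C * Real.sqrt N * γ < |lam2| ^ 2 := by
    have hd : 0 < 2 * C * Real.sqrt N * γ := by positivity
    have := (lt_div_iff₀ hd).mp hεsmall
    nlinarith
  have hrpos : 0 < r := by rw [hr]; positivity
  have hRpos : 0 < R := by rw [hR]; positivity
  have hrL : r * |lam2| = 2 * ε * C * Real.sqrt N := by
    rw [hr]; field_simp
  have hRg : R * γ = |lam2| := by rw [hR]; field_simp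
  have hrlt : γ * r < |lam2| := by
    nlinarith [hrL, hkey, hLpos]
  have hrltR : r < R := by
    nlinarith [hrlt, hRg, hγ, hrpos]
  have hr2R2 : r ^ 2 < R ^ 2 := by nlinarith
  have hlam2 : lam2 = -(γ * R) := by nlinarith [hRg, habs]
  have habs2 : |lam2| = γ * R := by nlinarith [hRg]
  have hb2 : 2 * ε * C * Real.sqrt N = γ * r * R := by nlinarith [hrL, hRg]
  -- key negativity estimate for the right-hand side on [r², R²]
  have hfneg : ∀ x, r ^ 2 ≤ x → x ≤ R ^ 2 →
      2 * lam2 * x + γ * (x * Real.sqrt x) + 2 * ε * C * Real.sqrt N * Real.sqrt x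
        ≤ (γ * r - |lam2|) * x := by
    intro x hx1 hx2
    have hx0 : 0 ≤ x := le_trans (by positivity) hx1
    set s := Real.sqrt x with hs
    have hs0 : 0 ≤ s := Real.sqrt_nonneg x
    have hs2 : s ^ 2 = x := Real.sq_sqrt hx0
    have hrs : r ≤ s := by
      have h := Real.sqrt_le_sqrt hx1
      rwa [Real.sqrt_sq hrpos.le] at h
    have hsR : s ≤ R := by
      have h := Real.sqrt_le_sqrt hx2
      rwa [Real.sqrt_sq hRpos.le] at h
    rw [habs2, hb2, hlam2, ← hs2]
    nlinarith [mul_nonneg (mul_nonneg (mul_nonneg hγ.le hs0) (sub_nonneg.mpr hrs))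
        (sub_nonneg.mpr hsR)]
  have hcont : Continuous u := hdiff.continuous
  have hderiv : ∀ (a b : ℝ), ∀ x ∈ Set.Ico a b,
      HasDerivWithinAt u (deriv u x) (Set.Ici x) x :=
    fun a b x _ => (hdiff x).hasDerivAt.hasDerivWithinAt
  have hcobdd : IsCoboundedUnder (· ≤ ·) atTop u :=
    IsCoboundedUnder.of_frequently_ge
      (((eventually_ge_atTop (0 : ℝ)).mono hnonneg).frequently)
  -- main step: for every c in (r², R²), limsup u ≤ c
  have hlimc : ∀ c, r ^ 2 < c → c < R ^ 2 → limsup u atTop ≤ c := by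
    intro c hc1 hc2
    have hcpos : 0 < c := lt_trans (by positivity) hc1
    -- once below c, stay below c
    have hstay : ∀ a t : ℝ, 0 ≤ a → u a ≤ c → a ≤ t → u t ≤ c := by
      intro a t ha hua hat
      have bound : ∀ x ∈ Set.Ico a t, u x = c → deriv u x < (fun _ : ℝ => (0 : ℝ)) x := by
        intro x hx hux
        have hx0 : 0 ≤ x := ha.trans hx.1
        have h1 := hineq x hx0
        rw [hux] at h1
        have h2 := hfneg c hc1.le hc2.le
        have h3 : (γ * r - |lam2|) * c < 0 :=
          mul_neg_of_neg_of_pos (by linarith) hcpos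
        exact lt_of_le_of_lt (h1.trans h2) h3
      exact image_le_of_deriv_right_lt_deriv_boundary (B := fun _ => c)
        (B' := fun _ => (0:ℝ)) hcont.continuousOn
        (hderiv a t) hua (fun x => hasDerivAt_const x c) bound ⟨hat, le_refl t⟩
    -- u stays below M := max (u 0) c
    set M := max (u 0) c with hM
    have hMc : c ≤ M := le_max_right _ _
    have hMR : M < R ^ 2 := max_lt h0 hc2
    have hMbound : ∀ t : ℝ, 0 ≤ t → u t ≤ M := by
      intro t ht
      have bound : ∀ x ∈ Set.Ico 0 t, u x = M → deriv u x < (fun _ : ℝ => (0 : ℝ)) x := by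
        intro x hx hux
        have h1 := hineq x hx.1
        rw [hux] at h1
        have h2 := hfneg M (le_trans hc1.le hMc) hMR.le
        have h3 : (γ * r - |lam2|) * M < 0 :=
          mul_neg_of_neg_of_pos (by linarith) (lt_of_lt_of_le hcpos hMc)
        exact lt_of_le_of_lt (h1.trans h2) h3
      exact image_le_of_deriv_right_lt_deriv_boundary (B := fun _ => M)
        (B' := fun _ => (0:ℝ)) hcont.continuousOn
        (hderiv 0 t) (le_max_left _ _) (fun x => hasDerivAt_const x M) bound ⟨ht, le_refl t⟩
    -- find a time where u ≤ c
    have hreach : ∃ T : ℝ, 0 ≤ T ∧ u T ≤ c := by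
      by_contra hcon
      push_neg at hcon
      set δ := (|lam2| - γ * r) * c with hδ
      have hδpos : 0 < δ := mul_pos (by linarith) hcpos
      have hdecay : ∀ t : ℝ, 0 ≤ t → u t ≤ u 0 - δ * t := by
        intro t ht
        have hBcont : ContinuousOn (fun x : ℝ => u 0 - δ * x) (Set.Icc 0 t) := by fun_prop
        have hB' : ∀ x ∈ Set.Ico (0:ℝ) t,
            HasDerivWithinAt (fun x : ℝ => u 0 - δ * x) (-δ) (Set.Ici x) x := by
          intro x _
          have hd : HasDerivAt (fun x : ℝ => u 0 - δ * x) (0 - δ * 1) x :=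
            (hasDerivAt_const x (u 0)).sub ((hasDerivAt_id x).const_mul δ)
          simpa using hd.hasDerivWithinAt
        have bound : ∀ x ∈ Set.Ico (0:ℝ) t, deriv u x ≤ -δ := by
          intro x hx
          have hx0 : 0 ≤ x := hx.1
          have hcx : c < u x := hcon x hx0
          have h1 := hineq x hx0
          have h2 := hfneg (u x) (hc1.le.trans hcx.le) ((hMbound x hx0).trans hMR.le)
          have h3 : (γ * r - |lam2|) * u x ≤ (γ * r - |lam2|) * c := by
            nlinarith [hrlt, hcx]
          have h4 : deriv u x ≤ (γ * r - |lam2|) * c := (h1.trans h2).trans h3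
          rw [hδ]; linarith
        have := image_le_of_deriv_right_le_deriv_boundary hcont.continuousOn
          (hderiv 0 t) (by simp) hBcont hB' bound ⟨ht, le_refl t⟩
        simpa using this
      have hu0 : 0 ≤ u 0 := hnonneg 0 le_rfl
      set T := u 0 / δ + 1 with hT
      have hTpos : 0 < T := by positivity
      have h1 := hdecay T hTpos.le
      have h2 := hnonneg T hTpos.le
      have h3 : u 0 - δ * T = -δ := by
        rw [hT]; field_simp; ring
      nlinarith
    obtain ⟨T, hT0, hTc⟩ := hreach
    refine limsup_le_of_le hcobdd ?_
    exact eventually_atTop.mpr ⟨T, fun t ht => hstay T t hT0 hTc ht⟩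
  refine le_of_forall_gt_imp_ge_of_dense fun d hd => ?_
  have h1 : r ^ 2 < min d ((r ^ 2 + R ^ 2) / 2) := lt_min hd (by nlinarith)
  have h2 : min d ((r ^ 2 + R ^ 2) / 2) < R ^ 2 :=
    lt_of_le_of_lt (min_le_right _ _) (by nlinarith)
  exact (hlimc _ h1 h2).trans (min_le_left _ _)
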